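/- arXiv:1610.04409 — 3 statements merged into one kernel-verified Lean document; each statement's English description precedes it below -/
import Mathlib

section
/- The operator O = O_{(γ₁,γ₂)} on H^{(γ₁,c₁)} ⊗ H^{(γ₂,c₂)} satisfies the commutation relations [Δa⁻, O] = 0, [Δε, O] = O, and [Δa⁺, O] = 0; consequently O maps lowest weight vectors to lowest weight vectors, raising the Δε-eigenvalue by 1. -/
noncomputable section
noncomputable section

/-- The `q`-number `[γ]_q = (q^γ - q^(-γ))/(q - q⁻¹)`. -/
def qnum (q γ : ℝ) : ℝ := (q ^ γ - q ^ (-γ)) / (q - q⁻¹)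

/-- The representation space `H^{(γ,c)}`: finitely supported functions `ℕ → ℂ`. -/
abbrev HO : Type := ℕ →₀ ℂ

/-- The basis vector `h_m`. -/
def hv (m : ℕ) : HO := Finsupp.single m 1

/-- The lowering operator `a⁻ h_m = [γ]_q^{1/2} m^{1/2} h_{m-1}` (so `a⁻ h_0 = 0`). -/
def aMinus (q γ : ℝ) : HO →ₗ[ℂ] HO :=
  Finsupp.lift HO ℂ ℕ fun m => ((Real.sqrt (qnum q γ) * Real.sqrt m : ℝ) : ℂ) • hv (m - 1)

/-- The raising operator `a⁺ h_m = [γ]_q^{1/2} (m+1)^{1/2} h_{m+1}`. -/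
def aPlus (q γ : ℝ) : HO →ₗ[ℂ] HO :=
  Finsupp.lift HO ℂ ℕ fun m => ((Real.sqrt (qnum q γ) * Real.sqrt (m + 1) : ℝ) : ℂ) • hv (m + 1)

/-- The operator `ε h_m = (m + c) h_m`. -/
def epsOp (c : ℝ) : HO →ₗ[ℂ] HO :=
  Finsupp.lift HO ℂ ℕ fun m => (((m : ℝ) + c : ℝ) : ℂ) • hv m

open scoped TensorProduct

/-- The coproduct action of `a⁺` on `H^{(γ₁,c₁)} ⊗ H^{(γ₂,c₂)}`:
`Δa⁺ = q^{γ₂/2}(a⁺ ⊗ 1) + q^{−γ₁/2}(1 ⊗ a⁺)`. -/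
def ΔaPlus (q γ₁ γ₂ : ℝ) : HO ⊗[ℂ] HO →ₗ[ℂ] HO ⊗[ℂ] HO :=
  ((q ^ (γ₂ / 2) : ℝ) : ℂ) • (aPlus q γ₁).rTensor HO +
    ((q ^ (-(γ₁ / 2)) : ℝ) : ℂ) • (aPlus q γ₂).lTensor HO

/-- The coproduct action of `a⁻` on `H^{(γ₁,c₁)} ⊗ H^{(γ₂,c₂)}`:
`Δa⁻ = q^{γ₂/2}(a⁻ ⊗ 1) + q^{−γ₁/2}(1 ⊗ a⁻)`. -/
def ΔaMinus (q γ₁ γ₂ : ℝ) : HO ⊗[ℂ] HO →ₗ[ℂ] HO ⊗[ℂ] HO :=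
  ((q ^ (γ₂ / 2) : ℝ) : ℂ) • (aMinus q γ₁).rTensor HO +
    ((q ^ (-(γ₁ / 2)) : ℝ) : ℂ) • (aMinus q γ₂).lTensor HO

/-- The coproduct action of `ε` on `H^{(γ₁,c₁)} ⊗ H^{(γ₂,c₂)}`: `Δε = ε ⊗ 1 + 1 ⊗ ε`. -/
def Δeps (c₁ c₂ : ℝ) : HO ⊗[ℂ] HO →ₗ[ℂ] HO ⊗[ℂ] HO :=
  (epsOp c₁).rTensor HO + (epsOp c₂).lTensor HO

/-- The matrix coefficient of the braid operator `B_{(γ₁,c₁),(γ₂,c₂)}`. -/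
def bcoef (q γ₁ γ₂ c₁ c₂ : ℝ) (m m' k : ℕ) : ℝ :=
  q ^ (-(((m : ℝ) + c₁) * γ₂ + ((m' : ℝ) + c₂) * γ₁)) *
    Real.sqrt (Nat.choose (m + k - 1) (m - 1)) * Real.sqrt (Nat.choose (m' + k) m') *
    Real.sqrt ((q ^ (-(2 * γ₁)) - 1) * (1 - q ^ (2 * γ₂))) ^ k

/-- The braid operator `B_{(γ₁,c₁),(γ₂,c₂)} : H^{(γ₁,c₁)} ⊗ H^{(γ₂,c₂)} → H^{(γ₂,c₂)} ⊗ H^{(γ₁,c₁)}`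
(the flip composed with the `R`-matrix of `ho_q`), defined on basis vectors by
`B(h_m ⊗ h_{m'}) = q^{−((m+c₁)γ₂+(m'+c₂)γ₁)} Σ_{k=0}^m binom(m+k−1,m−1)^{1/2} binom(m'+k,m')^{1/2}
((q^{−2γ₁}−1)(1−q^{2γ₂}))^{k/2} h_{m'+k} ⊗ h_{m−k}`. -/
def braidOp (q γ₁ γ₂ c₁ c₂ : ℝ) : HO ⊗[ℂ] HO →ₗ[ℂ] HO ⊗[ℂ] HO :=
  TensorProduct.lift <|
    Finsupp.lift (HO →ₗ[ℂ] HO ⊗[ℂ] HO) ℂ ℕ fun m =>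
      Finsupp.lift (HO ⊗[ℂ] HO) ℂ ℕ fun m' =>
        ∑ k ∈ Finset.range (m + 1),
          ((bcoef q γ₁ γ₂ c₁ c₂ m m' k : ℝ) : ℂ) • (hv (m' + k) ⊗ₜ[ℂ] hv (m - k))

/-- The ladder operator
`O_{(γ₁,γ₂)} = q^{−γ₁/2}[γ₁]_q^{−1/2}[γ₂]_q^{1/2}(a⁺ ⊗ 1) − q^{γ₂/2}[γ₁]_q^{1/2}[γ₂]_q^{−1/2}(1 ⊗ a⁺)`
on `H^{(γ₁,c₁)} ⊗ H^{(γ₂,c₂)}` (the subtraction is written as adding the negated scalar multiple,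
since `Sub` is not directly available on this hom type). -/
def Oop (q γ₁ γ₂ : ℝ) : HO ⊗[ℂ] HO →ₗ[ℂ] HO ⊗[ℂ] HO :=
  ((q ^ (-(γ₁ / 2)) * (Real.sqrt (qnum q γ₁))⁻¹ * Real.sqrt (qnum q γ₂) : ℝ) : ℂ) •
      (aPlus q γ₁).rTensor HO +
    (-((q ^ (γ₂ / 2) * Real.sqrt (qnum q γ₁) * (Real.sqrt (qnum q γ₂))⁻¹ : ℝ) : ℂ)) •
      (aPlus q γ₂).lTensor HO

/-- The canonical zero of the tensor product (made an instance to help elaboration). -/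
noncomputable instance : Zero (HO ⊗[ℂ] HO) := AddMonoid.toZero

lemma qnum_pos {q γ : ℝ} (hq0 : 0 < q) (hq1 : q < 1) (hγ : 0 < γ) : 0 < qnum q γ := by
  have h1 : q ^ γ < q ^ (-γ) := by
    apply Real.rpow_lt_rpow_of_exponent_gt hq0 hq1; linarith
  have h2 : q < q⁻¹ := by
    have : 1 < q⁻¹ := (one_lt_inv₀ hq0).2 hq1
    linarith
  exact div_pos_of_neg_of_neg (by linarith) (by linarith)

lemma aPlus_hv (q γ : ℝ) (m : ℕ) :
    aPlus q γ (hv m) = ((Real.sqrt (qnum q γ) * Real.sqrt (m + 1) : ℝ) : ℂ) • hv (m + 1) := by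
  simp [aPlus, hv, Finsupp.sum_single_index]

lemma aMinus_hv (q γ : ℝ) (m : ℕ) :
    aMinus q γ (hv m) = ((Real.sqrt (qnum q γ) * Real.sqrt m : ℝ) : ℂ) • hv (m - 1) := by
  simp [aMinus, hv, Finsupp.sum_single_index]

lemma epsOp_hv (c : ℝ) (m : ℕ) : epsOp c (hv m) = (((m : ℝ) + c : ℝ) : ℂ) • hv m := by
  simp only [epsOp, hv, Finsupp.lift_apply]
  rw [Finsupp.sum_single_index] <;> simp

lemma comm_minus_plus (q γ : ℝ) (h : 0 ≤ qnum q γ) :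
    aMinus q γ ∘ₗ aPlus q γ = aPlus q γ ∘ₗ aMinus q γ + ((qnum q γ : ℝ) : ℂ) • LinearMap.id := by
  refine Finsupp.lhom_ext fun m b => ?_
  have hs : (Finsupp.single m b : HO) = b • hv m := by simp [hv, Finsupp.smul_single]
  rw [hs]; simp only [map_smul]
  congr 1
  simp only [LinearMap.comp_apply, LinearMap.add_apply, LinearMap.smul_apply, LinearMap.id_apply]
  rw [aPlus_hv, aMinus_hv, map_smul, map_smul, aMinus_hv, aPlus_hv, smul_smul, smul_smul]
  cases m with
  | zero =>
      norm_num
      rw [← Complex.ofReal_mul, Real.mul_self_sqrt h, ← Complex.coe_algebraMap,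
        algebraMap_smul]
  | succ n =>
      have e1 : (n + 1 - 1 : ℕ) = n := rfl
      rw [e1, ← add_smul]
      congr 1
      push_cast
      norm_cast
      have hQ := Real.mul_self_sqrt h
      have h2 := Real.mul_self_sqrt (show (0:ℝ) ≤ ((n + 1 + 1 : ℕ) : ℝ) by positivity)
      have h3 := Real.mul_self_sqrt (show (0:ℝ) ≤ ((n + 1 : ℕ) : ℝ) by positivity)
      rw [mul_mul_mul_comm, hQ, h2, mul_mul_mul_comm, hQ, h3]
      push_cast
      ring

lemma comm_eps_plus (q γ c : ℝ) :
    epsOp c ∘ₗ aPlus q γ = aPlus q γ ∘ₗ epsOp c + aPlus q γ := by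
  refine Finsupp.lhom_ext fun m b => ?_
  have hs : (Finsupp.single m b : HO) = b • hv m := by simp [hv, Finsupp.smul_single]
  rw [hs]; simp only [map_smul]
  congr 1
  simp only [LinearMap.comp_apply, LinearMap.add_apply]
  rw [aPlus_hv, epsOp_hv, map_smul, map_smul, epsOp_hv, aPlus_hv, smul_smul, smul_smul,
    ← add_smul]
  congr 1
  push_cast
  ring

lemma crossEq (f g : HO →ₗ[ℂ] HO) :
    g.lTensor HO ∘ₗ f.rTensor HO = f.rTensor HO ∘ₗ g.lTensor HO := by
  rw [LinearMap.rTensor_comp_lTensor, LinearMap.lTensor_comp_rTensor]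

lemma scal_aux (x y sa sb : ℝ) (ha : sa ≠ 0) (hb : sb ≠ 0) :
    x * (y * sa⁻¹ * sb) * (sa * sa) = y * (x * sa * sb⁻¹) * (sb * sb) := by
  field_simp


/-- `O = O_{(γ₁,γ₂)}` satisfies `[Δa⁻, O] = 0`, `[Δε, O] = O`, `[Δa⁺, O] = 0`
(commutators written as equalities of compositions); consequently `O` maps lowest weight
vectors to lowest weight vectors, raising the `Δε`-eigenvalue by `1`. -/
theorem stmt5 (q γ₁ γ₂ c₁ c₂ : ℝ) (hq0 : 0 < q) (hq1 : q < 1)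
    (hγ₁ : 0 < γ₁) (hγ₂ : 0 < γ₂) :
    (ΔaMinus q γ₁ γ₂ ∘ₗ Oop q γ₁ γ₂ = Oop q γ₁ γ₂ ∘ₗ ΔaMinus q γ₁ γ₂) ∧
    (Δeps c₁ c₂ ∘ₗ Oop q γ₁ γ₂ = Oop q γ₁ γ₂ ∘ₗ Δeps c₁ c₂ + Oop q γ₁ γ₂) ∧
    (ΔaPlus q γ₁ γ₂ ∘ₗ Oop q γ₁ γ₂ = Oop q γ₁ γ₂ ∘ₗ ΔaPlus q γ₁ γ₂) ∧
    (∀ (v : HO ⊗[ℂ] HO) (e : ℂ), ΔaMinus q γ₁ γ₂ v = 0 → Δeps c₁ c₂ v = e • v →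
      ΔaMinus q γ₁ γ₂ (Oop q γ₁ γ₂ v) = 0 ∧
      Δeps c₁ c₂ (Oop q γ₁ γ₂ v) = (e + 1) • Oop q γ₁ γ₂ v) := by
  have hQ1 : 0 < qnum q γ₁ := qnum_pos hq0 hq1 hγ₁
  have hQ2 : 0 < qnum q γ₂ := qnum_pos hq0 hq1 hγ₂
  have hs1 : Real.sqrt (qnum q γ₁) ≠ 0 := by positivity
  have hs2 : Real.sqrt (qnum q γ₂) ≠ 0 := by positivity
  have hB1A1 : (aMinus q γ₁).rTensor HO ∘ₗ (aPlus q γ₁).rTensor HO =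
      (aPlus q γ₁).rTensor HO ∘ₗ (aMinus q γ₁).rTensor HO +
        ((qnum q γ₁ : ℝ) : ℂ) • LinearMap.id := by
    have h := congrArg (LinearMap.rTensor (R := ℂ) HO) (comm_minus_plus q γ₁ hQ1.le)
    simpa [LinearMap.rTensor_comp, LinearMap.rTensor_add, LinearMap.rTensor_smul,
      LinearMap.rTensor_id] using h
  have hB2A2 : (aMinus q γ₂).lTensor HO ∘ₗ (aPlus q γ₂).lTensor HO =
      (aPlus q γ₂).lTensor HO ∘ₗ (aMinus q γ₂).lTensor HO +
        ((qnum q γ₂ : ℝ) : ℂ) • LinearMap.id := by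
    have h := congrArg (LinearMap.lTensor (R := ℂ) HO) (comm_minus_plus q γ₂ hQ2.le)
    simpa [LinearMap.lTensor_comp, LinearMap.lTensor_add, LinearMap.lTensor_smul,
      LinearMap.lTensor_id] using h
  have hE1A1 : (epsOp c₁).rTensor HO ∘ₗ (aPlus q γ₁).rTensor HO =
      (aPlus q γ₁).rTensor HO ∘ₗ (epsOp c₁).rTensor HO + (aPlus q γ₁).rTensor HO := by
    have h := congrArg (LinearMap.rTensor (R := ℂ) HO) (comm_eps_plus q γ₁ c₁)
    simpa [LinearMap.rTensor_comp, LinearMap.rTensor_add] using h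
  have hE2A2 : (epsOp c₂).lTensor HO ∘ₗ (aPlus q γ₂).lTensor HO =
      (aPlus q γ₂).lTensor HO ∘ₗ (epsOp c₂).lTensor HO + (aPlus q γ₂).lTensor HO := by
    have h := congrArg (LinearMap.lTensor (R := ℂ) HO) (comm_eps_plus q γ₂ c₂)
    simpa [LinearMap.lTensor_comp, LinearMap.lTensor_add] using h
  have key : (q ^ (γ₂ / 2)) * (q ^ (-(γ₁ / 2)) * (Real.sqrt (qnum q γ₁))⁻¹ *
        Real.sqrt (qnum q γ₂)) * qnum q γ₁ =
      q ^ (-(γ₁ / 2)) * (q ^ (γ₂ / 2) * Real.sqrt (qnum q γ₁) *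
        (Real.sqrt (qnum q γ₂))⁻¹) * qnum q γ₂ := by
    have h := scal_aux (q ^ (γ₂ / 2)) (q ^ (-(γ₁ / 2))) (Real.sqrt (qnum q γ₁))
      (Real.sqrt (qnum q γ₂)) hs1 hs2
    rwa [Real.mul_self_sqrt hQ1.le, Real.mul_self_sqrt hQ2.le] at h
  have hmin : ΔaMinus q γ₁ γ₂ ∘ₗ Oop q γ₁ γ₂ = Oop q γ₁ γ₂ ∘ₗ ΔaMinus q γ₁ γ₂ := by
    simp only [ΔaMinus, Oop, LinearMap.add_comp, LinearMap.comp_add, LinearMap.smul_comp,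
      LinearMap.comp_smul, crossEq, hB1A1, hB2A2]
    simp only [LinearMap.comp_add, LinearMap.comp_smul, LinearMap.smul_comp, smul_add]
    have keyC := congrArg (fun r : ℝ => (r : ℂ)) key
    push_cast at keyC
    match_scalars
    all_goals try ring
    all_goals (ring_nf; ring_nf at keyC; linear_combination keyC)
  have heps : Δeps c₁ c₂ ∘ₗ Oop q γ₁ γ₂ = Oop q γ₁ γ₂ ∘ₗ Δeps c₁ c₂ + Oop q γ₁ γ₂ := by
    simp only [Δeps, Oop, LinearMap.add_comp, LinearMap.comp_add, LinearMap.smul_comp,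
      LinearMap.comp_smul, crossEq, hE1A1, hE2A2]
    simp only [LinearMap.comp_add, LinearMap.comp_smul, LinearMap.smul_comp, smul_add]
    match_scalars <;> ring
  have hplus : ΔaPlus q γ₁ γ₂ ∘ₗ Oop q γ₁ γ₂ = Oop q γ₁ γ₂ ∘ₗ ΔaPlus q γ₁ γ₂ := by
    simp only [ΔaPlus, Oop, LinearMap.add_comp, LinearMap.comp_add, LinearMap.smul_comp,
      LinearMap.comp_smul, crossEq]
    match_scalars <;> ring
  refine ⟨hmin, heps, hplus, fun v e hv0 hve => ?_⟩
  constructor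
  · have := congrFun (congrArg DFunLike.coe hmin) v
    simp only [LinearMap.comp_apply] at this
    rw [this, hv0, map_zero]
  · have := congrFun (congrArg DFunLike.coe heps) v
    simp only [LinearMap.comp_apply, LinearMap.add_apply] at this
    rw [this, hve, map_smul, add_smul, one_smul]
end
end
end

section
/- Set γ = γ₁ + γ₂ and, for i, j ∈ ℕ, define v_i^{(j)} = ([γ]_q^i · i!)^{−1/2} ([γ]_q^j · j!)^{−1/2} (Δa⁺)^i O^j (h₀ ⊗ h₀) in H^{(γ₁,c₁)} ⊗ H^{(γ₂,c₂)}. Then these vectors are orthonormal: ⟨v_i^{(j)}, v_{i'}^{(j')}⟩ = δ_{i i'} δ_{j j'} for all i, i', j, j' ∈ ℕ. -/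
noncomputable section
noncomputable section

open scoped TensorProduct

/-- The hermitian inner product on `α →₀ ℂ` making the standard basis orthonormal
(antilinear in the first argument). -/
def finner {α : Type*} (v w : α →₀ ℂ) : ℂ := v.sum fun a x => (starRingEnd ℂ) x * w a

/-- The hermitian inner product on `H ⊗ H` making the vectors `h_m ⊗ h_{m'}` orthonormal,
via the canonical identification of `(ℕ →₀ ℂ) ⊗[ℂ] (ℕ →₀ ℂ)` with `ℕ × ℕ →₀ ℂ`. -/
def tinner (v w : HO ⊗[ℂ] HO) : ℂ :=
  finner (finsuppTensorFinsupp' ℂ ℕ ℕ v) (finsuppTensorFinsupp' ℂ ℕ ℕ w)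

/-- The vectors `v_i^{(j)} = ([γ]_q^i i!)^{−1/2} ([γ]_q^j j!)^{−1/2} (Δa⁺)^i O^j (h₀ ⊗ h₀)`,
with `γ = γ₁ + γ₂`. -/
def vij (q γ₁ γ₂ : ℝ) (i j : ℕ) : HO ⊗[ℂ] HO :=
  (((Real.sqrt ((qnum q (γ₁ + γ₂)) ^ i * i.factorial))⁻¹ : ℝ) : ℂ) •
    (((Real.sqrt ((qnum q (γ₁ + γ₂)) ^ j * j.factorial))⁻¹ : ℝ) : ℂ) •
      ((ΔaPlus q γ₁ γ₂) ^ i) (((Oop q γ₁ γ₂) ^ j) (hv 0 ⊗ₜ[ℂ] hv 0))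


/-! ### Auxiliary lemmas -/

namespace Stmt9Aux

open LinearMap Finsupp

/-- Shortcut instance: the `Zero` instance on the tensor product (instance search for this
otherwise gets stuck). -/
noncomputable instance : Zero (HO ⊗[ℂ] HO) :=
  (inferInstance : AddCommMonoid (HO ⊗[ℂ] HO)).toZero

local notation "conj'" => starRingEnd ℂ

/-! #### finner basics -/

lemma finner_single_left {α : Type*} (a : α) (x : ℂ) (w : α →₀ ℂ) :
    finner (Finsupp.single a x) w = conj' x * w a :=
  Finsupp.sum_single_index (by simp)

lemma finner_zero_left {α : Type*} (w : α →₀ ℂ) : finner 0 w = 0 :=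
  Finsupp.sum_zero_index

lemma finner_add_left {α : Type*} (v v' w : α →₀ ℂ) :
    finner (v + v') w = finner v w + finner v' w :=
  by classical exact Finsupp.sum_add_index (by simp) (by intros; simp [map_add, add_mul])

lemma finner_smul_left {α : Type*} (c : ℂ) (v w : α →₀ ℂ) :
    finner (c • v) w = conj' c * finner v w := by
  rw [finner, Finsupp.sum_smul_index' (by simp), finner, Finsupp.mul_sum]
  refine Finsupp.sum_congr fun a _ => ?_
  simp [smul_eq_mul, map_mul]; ring

lemma finner_zero_right {α : Type*} (v : α →₀ ℂ) : finner v 0 = 0 := by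
  simp [finner]

lemma finner_add_right {α : Type*} (v w w' : α →₀ ℂ) :
    finner v (w + w') = finner v w + finner v w' := by
  simp only [finner, Finsupp.add_apply, mul_add]
  exact Finsupp.sum_add

lemma finner_smul_right {α : Type*} (c : ℂ) (v w : α →₀ ℂ) :
    finner v (c • w) = c * finner v w := by
  simp only [finner, Finsupp.smul_apply, smul_eq_mul, Finsupp.mul_sum]
  refine Finsupp.sum_congr fun a _ => ?_
  ring

lemma finner_conj_symm {α : Type*} (v w : α →₀ ℂ) :
    conj' (finner v w) = finner w v := by
  induction v using Finsupp.induction_linear with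
  | zero => simp [finner_zero_left, finner_zero_right]
  | add f g hf hg => simp [finner_add_left, finner_add_right, map_add, hf, hg]
  | single a x =>
    induction w using Finsupp.induction_linear with
    | zero => simp [finner_zero_left, finner_zero_right]
    | add f g hf hg => simp [finner_add_left, finner_add_right, map_add, hf, hg]
    | single b y =>
      rw [finner_single_left, finner_single_left]
      simp only [Finsupp.single_apply, map_mul]
      rcases eq_or_ne a b with rfl | h
      · simp; ring
      · simp [h, Ne.symm h]

/-! #### tinner basics -/

lemma tinner_zero_left (w : HO ⊗[ℂ] HO) : tinner 0 w = 0 := by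
  rw [tinner, LinearEquiv.map_zero]; exact finner_zero_left _

lemma tinner_zero_right (v : HO ⊗[ℂ] HO) : tinner v 0 = 0 := by
  rw [tinner, LinearEquiv.map_zero]; exact finner_zero_right _

lemma tinner_add_left (v v' w : HO ⊗[ℂ] HO) :
    tinner (v + v') w = tinner v w + tinner v' w := by
  rw [tinner, LinearEquiv.map_add]; exact finner_add_left _ _ _

lemma tinner_add_right (v w w' : HO ⊗[ℂ] HO) :
    tinner v (w + w') = tinner v w + tinner v w' := by
  rw [tinner, LinearEquiv.map_add]; exact finner_add_right _ _ _

lemma tinner_smul_left (c : ℂ) (v w : HO ⊗[ℂ] HO) :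
    tinner (c • v) w = conj' c * tinner v w := by
  rw [tinner, LinearEquiv.map_smul]; exact finner_smul_left _ _ _

lemma tinner_smul_right (c : ℂ) (v w : HO ⊗[ℂ] HO) :
    tinner v (c • w) = c * tinner v w := by
  rw [tinner, LinearEquiv.map_smul]; exact finner_smul_right _ _ _

lemma tinner_conj_symm (v w : HO ⊗[ℂ] HO) :
    conj' (tinner v w) = tinner w v :=
  finner_conj_symm _ _

lemma tinner_tmul (a b c d : HO) :
    tinner (a ⊗ₜ[ℂ] b) (c ⊗ₜ[ℂ] d) = finner a c * finner b d := by
  induction a using Finsupp.induction_linear with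
  | zero => simp [TensorProduct.zero_tmul, tinner_zero_left, finner_zero_left]
  | add f g hf hg =>
      simp [TensorProduct.add_tmul, tinner_add_left, finner_add_left, hf, hg, add_mul]
  | single m x =>
    induction b using Finsupp.induction_linear with
    | zero => simp [TensorProduct.tmul_zero, tinner_zero_left, finner_zero_left]
    | add f g hf hg =>
        simp [TensorProduct.tmul_add, tinner_add_left, finner_add_left, hf, hg, mul_add, add_mul]
    | single n y =>
      induction c using Finsupp.induction_linear with
      | zero => simp [TensorProduct.zero_tmul, tinner_zero_right, finner_zero_right]
      | add f g hf hg =>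
          simp [TensorProduct.add_tmul, tinner_add_right, finner_add_right, hf, hg, mul_add, add_mul]
      | single m' x' =>
        induction d using Finsupp.induction_linear with
        | zero => simp [TensorProduct.tmul_zero, tinner_zero_right, finner_zero_right]
        | add f g hf hg =>
            simp [TensorProduct.tmul_add, tinner_add_right, finner_add_right, hf, hg, mul_add]
        | single n' y' =>
          rw [tinner, finsuppTensorFinsupp'_single_tmul_single,
            finsuppTensorFinsupp'_single_tmul_single, finner_single_left,
            finner_single_left, finner_single_left]
          simp only [Finsupp.single_apply, Prod.mk.injEq, map_mul]
          by_cases hm : m' = m <;> by_cases hn : n' = n <;>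
            simp [hm, hn] <;> ring

/-! #### aPlus / aMinus on singles -/

lemma aPlus_single (q γ : ℝ) (m : ℕ) (x : ℂ) :
    aPlus q γ (Finsupp.single m x) =
      Finsupp.single (m + 1) (x * ((Real.sqrt (qnum q γ) * Real.sqrt (m + 1) : ℝ) : ℂ)) := by
  rw [aPlus, Finsupp.lift_apply, Finsupp.sum_single_index (by simp), hv, smul_smul,
    Finsupp.smul_single, smul_eq_mul, mul_one]

lemma aMinus_single (q γ : ℝ) (m : ℕ) (x : ℂ) :
    aMinus q γ (Finsupp.single m x) =
      Finsupp.single (m - 1) (x * ((Real.sqrt (qnum q γ) * Real.sqrt m : ℝ) : ℂ)) := by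
  rw [aMinus, Finsupp.lift_apply, Finsupp.sum_single_index (by simp), hv, smul_smul,
    Finsupp.smul_single, smul_eq_mul, mul_one]

lemma aMinus_hv0 (q γ : ℝ) : aMinus q γ (hv 0) = 0 := by
  rw [hv, aMinus_single]; simp

/-- Adjointness of `aPlus` and `aMinus` for `finner`. -/
lemma finner_aPlus (q γ : ℝ) (v w : HO) :
    finner (aPlus q γ v) w = finner v (aMinus q γ w) := by
  induction v using Finsupp.induction_linear with
  | zero => simp [finner_zero_left]
  | add f g hf hg => simp [map_add, finner_add_left, hf, hg]
  | single m x =>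
    induction w using Finsupp.induction_linear with
    | zero => simp [finner_zero_right]
    | add f g hf hg => simp [map_add, finner_add_right, hf, hg]
    | single n y =>
      rw [aPlus_single, aMinus_single, finner_single_left, finner_single_left]
      rcases n with _ | n
      · simp
      · simp only [Finsupp.single_apply, Nat.add_sub_cancel, map_mul, Complex.conj_ofReal,
          Nat.cast_succ]
        rcases eq_or_ne n m with rfl | h
        · simp; ring
        · simp [h, fun h' => h (Nat.succ_injective h'), Ne.symm h]

/-- The canonical commutation relation on `HO`. -/
lemma ccr (q γ : ℝ) (h : 0 ≤ qnum q γ) :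
    aMinus q γ ∘ₗ aPlus q γ = aPlus q γ ∘ₗ aMinus q γ + ((qnum q γ : ℝ) : ℂ) • LinearMap.id := by
  apply Finsupp.lhom_ext
  intro m x
  simp only [LinearMap.comp_apply, LinearMap.add_apply, LinearMap.smul_apply, LinearMap.id_apply,
    aPlus_single, aMinus_single, Nat.add_sub_cancel]
  rcases m with _ | mm
  · have e0 : (Real.sqrt (qnum q γ) * Real.sqrt (1:ℝ)) *
        (Real.sqrt (qnum q γ) * Real.sqrt (((1:ℕ)):ℝ)) = qnum q γ := by
      norm_num [Real.mul_self_sqrt h]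
    simp only [Nat.zero_sub, Nat.cast_zero, Real.sqrt_zero, mul_zero, Complex.ofReal_zero,
      zero_mul, Finsupp.single_zero, zero_add]
    rw [Finsupp.smul_single, mul_assoc, ← Complex.ofReal_mul, e0]
    congr 1
    rw [smul_eq_mul]
    ring
  · have hge : (0:ℝ) ≤ (mm:ℝ) + 1 := by positivity
    have e1 : (Real.sqrt (qnum q γ) * Real.sqrt (((mm+1:ℕ):ℝ) + 1)) *
        (Real.sqrt (qnum q γ) * Real.sqrt (((mm+1+1:ℕ)):ℝ)) = qnum q γ * ((mm:ℝ) + 2) := by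
      have h1 : ((mm+1+1 : ℕ):ℝ) = (mm:ℝ) + 2 := by push_cast; ring
      have h2 : ((mm+1 : ℕ):ℝ) + 1 = (mm:ℝ) + 2 := by push_cast; ring
      rw [h1, h2, mul_mul_mul_comm, Real.mul_self_sqrt h, Real.mul_self_sqrt (by positivity)]
    have e2 : (Real.sqrt (qnum q γ) * Real.sqrt (((mm+1:ℕ)):ℝ)) *
        (Real.sqrt (qnum q γ) * Real.sqrt (((mm:ℕ):ℝ) + 1)) = qnum q γ * ((mm:ℝ) + 1) := by
      have h1 : ((mm+1 : ℕ):ℝ) = (mm:ℝ) + 1 := by push_cast; ring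
      rw [h1, mul_mul_mul_comm, Real.mul_self_sqrt h, Real.mul_self_sqrt hge]
    simp only [Nat.add_sub_cancel]
    rw [Finsupp.smul_single, ← Finsupp.single_add]
    congr 1
    rw [mul_assoc, ← Complex.ofReal_mul, e1, mul_assoc, ← Complex.ofReal_mul, e2, smul_eq_mul]
    push_cast
    ring

/-! #### Tensor-level adjointness -/

lemma tinner_rTensor_adj (S S' : HO →ₗ[ℂ] HO)
    (h : ∀ v w, finner (S v) w = finner v (S' w)) (v w : HO ⊗[ℂ] HO) :
    tinner (LinearMap.rTensor HO S v) w = tinner v (LinearMap.rTensor HO S' w) := by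
  induction v using TensorProduct.induction_on with
  | zero => simp [tinner_zero_left]
  | tmul a b =>
    induction w using TensorProduct.induction_on with
    | zero => simp [tinner_zero_right]
    | tmul c d => simp [LinearMap.rTensor_tmul, tinner_tmul, h]
    | add w1 w2 h1 h2 => simp only [map_add, tinner_add_right]; rw [h1, h2]
  | add v1 v2 h1 h2 => simp only [map_add, tinner_add_left]; rw [h1, h2]

lemma tinner_lTensor_adj (S S' : HO →ₗ[ℂ] HO)
    (h : ∀ v w, finner (S v) w = finner v (S' w)) (v w : HO ⊗[ℂ] HO) :
    tinner (LinearMap.lTensor HO S v) w = tinner v (LinearMap.lTensor HO S' w) := by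
  induction v using TensorProduct.induction_on with
  | zero => simp [tinner_zero_left]
  | tmul a b =>
    induction w using TensorProduct.induction_on with
    | zero => simp [tinner_zero_right]
    | tmul c d => simp [LinearMap.lTensor_tmul, tinner_tmul, h]
    | add w1 w2 h1 h2 => simp only [map_add, tinner_add_right]; rw [h1, h2]
  | add v1 v2 h1 h2 => simp only [map_add, tinner_add_left]; rw [h1, h2]

lemma tinner_DaPlus (q γ₁ γ₂ : ℝ) (v w : HO ⊗[ℂ] HO) :
    tinner (ΔaPlus q γ₁ γ₂ v) w = tinner v (ΔaMinus q γ₁ γ₂ w) := by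
  rw [ΔaPlus, ΔaMinus]
  simp only [LinearMap.add_apply, LinearMap.smul_apply]
  rw [tinner_add_left, tinner_add_right, tinner_smul_left, tinner_smul_left,
    tinner_smul_right, tinner_smul_right, Complex.conj_ofReal, Complex.conj_ofReal,
    tinner_rTensor_adj (aPlus q γ₁) (aMinus q γ₁) (finner_aPlus q γ₁),
    tinner_lTensor_adj (aPlus q γ₂) (aMinus q γ₂) (finner_aPlus q γ₂)]

/-- The adjoint of the ladder operator `Oop`. -/
def Odag (q γ₁ γ₂ : ℝ) : HO ⊗[ℂ] HO →ₗ[ℂ] HO ⊗[ℂ] HO :=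
  ((q ^ (-(γ₁ / 2)) * (Real.sqrt (qnum q γ₁))⁻¹ * Real.sqrt (qnum q γ₂) : ℝ) : ℂ) •
      (aMinus q γ₁).rTensor HO +
    (-((q ^ (γ₂ / 2) * Real.sqrt (qnum q γ₁) * (Real.sqrt (qnum q γ₂))⁻¹ : ℝ) : ℂ)) •
      (aMinus q γ₂).lTensor HO

lemma tinner_Oop (q γ₁ γ₂ : ℝ) (v w : HO ⊗[ℂ] HO) :
    tinner (Oop q γ₁ γ₂ v) w = tinner v (Odag q γ₁ γ₂ w) := by
  rw [Oop, Odag]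
  simp only [LinearMap.add_apply, LinearMap.smul_apply]
  rw [tinner_add_left, tinner_add_right, tinner_smul_left, tinner_smul_left,
    tinner_smul_right, tinner_smul_right, map_neg, Complex.conj_ofReal, Complex.conj_ofReal,
    tinner_rTensor_adj (aPlus q γ₁) (aMinus q γ₁) (finner_aPlus q γ₁),
    tinner_lTensor_adj (aPlus q γ₂) (aMinus q γ₂) (finner_aPlus q γ₂)]

/-! #### Operator algebra -/

lemma rT_mul (f g : HO →ₗ[ℂ] HO) :
    LinearMap.rTensor HO f * LinearMap.rTensor HO g = LinearMap.rTensor HO (f ∘ₗ g) := by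
  rw [Module.End.mul_eq_comp, ← LinearMap.rTensor_comp]

lemma lT_mul (f g : HO →ₗ[ℂ] HO) :
    LinearMap.lTensor HO f * LinearMap.lTensor HO g = LinearMap.lTensor HO (f ∘ₗ g) := by
  rw [Module.End.mul_eq_comp, ← LinearMap.lTensor_comp]

lemma rT_lT_comm (f g : HO →ₗ[ℂ] HO) :
    LinearMap.rTensor HO f * LinearMap.lTensor HO g =
      LinearMap.lTensor HO g * LinearMap.rTensor HO f := by
  rw [Module.End.mul_eq_comp, Module.End.mul_eq_comp, LinearMap.rTensor_comp_lTensor,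
    LinearMap.lTensor_comp_rTensor]

lemma comm_expand {W : Type*} [AddCommMonoid W] [Module ℂ W] (RP RM LP LM : Module.End ℂ W)
    (c1 c2 d1 d2 N1 N2 : ℂ)
    (h1 : RM * RP = RP * RM + N1 • 1) (h2 : LM * LP = LP * LM + N2 • 1)
    (h3 : RM * LP = LP * RM) (h4 : LM * RP = RP * LM) :
    (c1 • RM + c2 • LM) * (d1 • RP + d2 • LP) =
      (d1 • RP + d2 • LP) * (c1 • RM + c2 • LM) + (c1 * d1 * N1 + c2 * d2 * N2) • 1 := by
  simp only [add_mul, mul_add, smul_mul_assoc, mul_smul_comm, h1, h2, h3, h4]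
  module

lemma comm_raise {W : Type*} [AddCommMonoid W] [Module ℂ W] (RP LP : Module.End ℂ W)
    (c1 c2 d1 d2 : ℂ) (h : RP * LP = LP * RP) :
    (c1 • RP + c2 • LP) * (d1 • RP + d2 • LP) =
      (d1 • RP + d2 • LP) * (c1 • RP + c2 • LP) := by
  simp only [add_mul, mul_add, smul_mul_assoc, mul_smul_comm, h]
  module

/-! #### Scalar identities -/

lemma qnum_pos {q γ : ℝ} (hq0 : 0 < q) (hq1 : q < 1) (hγ : 0 < γ) : 0 < qnum q γ := by
  have hnum : q ^ γ - q ^ (-γ) < 0 := by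
    have := Real.rpow_lt_rpow_of_exponent_gt hq0 hq1 (neg_lt_self hγ)
    linarith
  have hinv : q * q⁻¹ = 1 := mul_inv_cancel₀ hq0.ne'
  have hden : q - q⁻¹ < 0 := by nlinarith
  rw [qnum]
  exact div_pos_of_neg_of_neg hnum hden

lemma qnum_add {q : ℝ} (hq0 : 0 < q) (γ₁ γ₂ : ℝ) :
    q ^ γ₂ * qnum q γ₁ + q ^ (-γ₁) * qnum q γ₂ = qnum q (γ₁ + γ₂) := by
  have ha : q ^ γ₁ ≠ 0 := (Real.rpow_pos_of_pos hq0 _).ne'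
  have hb : q ^ γ₂ ≠ 0 := (Real.rpow_pos_of_pos hq0 _).ne'
  rw [qnum, qnum, qnum, Real.rpow_neg hq0.le γ₁, Real.rpow_neg hq0.le γ₂,
    Real.rpow_neg hq0.le (γ₁ + γ₂), Real.rpow_add hq0, ← mul_div_assoc, ← mul_div_assoc,
    ← add_div]
  congr 1
  field_simp
  ring

lemma rpow_half_mul {q : ℝ} (hq0 : 0 < q) (γ : ℝ) : q ^ (γ / 2) * q ^ (γ / 2) = q ^ γ := by
  rw [← Real.rpow_add hq0]
  norm_num

lemma rpow_neg_half_mul {q : ℝ} (hq0 : 0 < q) (γ : ℝ) :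
    q ^ (-(γ / 2)) * q ^ (-(γ / 2)) = q ^ (-γ) := by
  rw [← Real.rpow_add hq0]
  congr 1
  ring

lemma sqrt_combo (u v A B : ℝ) (hA : 0 < A) (hB : 0 < B) :
    (u * (Real.sqrt A)⁻¹ * Real.sqrt B) * (u * (Real.sqrt A)⁻¹ * Real.sqrt B) * A +
      (-(v * Real.sqrt A * (Real.sqrt B)⁻¹)) * (-(v * Real.sqrt A * (Real.sqrt B)⁻¹)) * B =
      u * u * B + v * v * A := by
  have sA : Real.sqrt A * Real.sqrt A = A := Real.mul_self_sqrt hA.le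
  have sB : Real.sqrt B * Real.sqrt B = B := Real.mul_self_sqrt hB.le
  have nA : Real.sqrt A ≠ 0 := by positivity
  have nB : Real.sqrt B ≠ 0 := by positivity
  have hA1 : (Real.sqrt A)⁻¹ * (Real.sqrt A)⁻¹ * A = 1 := by field_simp; linarith [sA]
  have hB1 : (Real.sqrt B)⁻¹ * (Real.sqrt B)⁻¹ * B = 1 := by field_simp; linarith [sB]
  calc (u * (Real.sqrt A)⁻¹ * Real.sqrt B) * (u * (Real.sqrt A)⁻¹ * Real.sqrt B) * A +
      (-(v * Real.sqrt A * (Real.sqrt B)⁻¹)) * (-(v * Real.sqrt A * (Real.sqrt B)⁻¹)) * B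
      = (u * u * (Real.sqrt B * Real.sqrt B)) * ((Real.sqrt A)⁻¹ * (Real.sqrt A)⁻¹ * A) +
        (v * v * (Real.sqrt A * Real.sqrt A)) * ((Real.sqrt B)⁻¹ * (Real.sqrt B)⁻¹ * B) := by
        ring
    _ = u * u * B + v * v * A := by rw [hA1, hB1, sA, sB]; ring

lemma sqrt_cross (u v A B : ℝ) (hA : 0 < A) (hB : 0 < B) :
    u * (v * (Real.sqrt A)⁻¹ * Real.sqrt B) * A + v * (-(u * Real.sqrt A * (Real.sqrt B)⁻¹)) * B = 0 := by
  have sA : Real.sqrt A * Real.sqrt A = A := Real.mul_self_sqrt hA.le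
  have sB : Real.sqrt B * Real.sqrt B = B := Real.mul_self_sqrt hB.le
  have nA : Real.sqrt A ≠ 0 := by positivity
  have nB : Real.sqrt B ≠ 0 := by positivity
  have hA1 : (Real.sqrt A)⁻¹ * A = Real.sqrt A := by field_simp; linarith [sA]
  have hB1 : (Real.sqrt B)⁻¹ * B = Real.sqrt B := by field_simp; linarith [sB]
  calc u * (v * (Real.sqrt A)⁻¹ * Real.sqrt B) * A + v * (-(u * Real.sqrt A * (Real.sqrt B)⁻¹)) * B
      = u * v * ((Real.sqrt A)⁻¹ * A) * Real.sqrt B - u * v * Real.sqrt A * ((Real.sqrt B)⁻¹ * B) := by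
        ring
    _ = 0 := by rw [hA1, hB1]; ring

section Scalars

variable {q γ₁ γ₂ : ℝ} (hq0 : 0 < q) (hq1 : q < 1) (hγ₁ : 0 < γ₁) (hγ₂ : 0 < γ₂)
include hq0 hq1 hγ₁ hγ₂

lemma scalarA :
    q ^ (γ₂ / 2) * q ^ (γ₂ / 2) * qnum q γ₁ + q ^ (-(γ₁ / 2)) * q ^ (-(γ₁ / 2)) * qnum q γ₂ =
      qnum q (γ₁ + γ₂) := by
  rw [rpow_half_mul hq0 γ₂, rpow_neg_half_mul hq0 γ₁]
  exact qnum_add hq0 γ₁ γ₂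

lemma scalarO :
    (q ^ (-(γ₁ / 2)) * (Real.sqrt (qnum q γ₁))⁻¹ * Real.sqrt (qnum q γ₂)) *
        (q ^ (-(γ₁ / 2)) * (Real.sqrt (qnum q γ₁))⁻¹ * Real.sqrt (qnum q γ₂)) * qnum q γ₁ +
      (-(q ^ (γ₂ / 2) * Real.sqrt (qnum q γ₁) * (Real.sqrt (qnum q γ₂))⁻¹)) *
        (-(q ^ (γ₂ / 2) * Real.sqrt (qnum q γ₁) * (Real.sqrt (qnum q γ₂))⁻¹)) * qnum q γ₂ =
      qnum q (γ₁ + γ₂) := by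
  rw [sqrt_combo (q ^ (-(γ₁ / 2))) (q ^ (γ₂ / 2)) (qnum q γ₁) (qnum q γ₂)
    (qnum_pos hq0 hq1 hγ₁) (qnum_pos hq0 hq1 hγ₂), rpow_neg_half_mul hq0 γ₁,
    rpow_half_mul hq0 γ₂, add_comm]
  exact qnum_add hq0 γ₁ γ₂

lemma scalarX1 :
    q ^ (γ₂ / 2) * (q ^ (-(γ₁ / 2)) * (Real.sqrt (qnum q γ₁))⁻¹ * Real.sqrt (qnum q γ₂)) *
        qnum q γ₁ +
      q ^ (-(γ₁ / 2)) * (-(q ^ (γ₂ / 2) * Real.sqrt (qnum q γ₁) * (Real.sqrt (qnum q γ₂))⁻¹)) *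
        qnum q γ₂ = 0 :=
  sqrt_cross (q ^ (γ₂ / 2)) (q ^ (-(γ₁ / 2))) (qnum q γ₁) (qnum q γ₂)
    (qnum_pos hq0 hq1 hγ₁) (qnum_pos hq0 hq1 hγ₂)

lemma scalarX2 :
    (q ^ (-(γ₁ / 2)) * (Real.sqrt (qnum q γ₁))⁻¹ * Real.sqrt (qnum q γ₂)) * q ^ (γ₂ / 2) *
        qnum q γ₁ +
      (-(q ^ (γ₂ / 2) * Real.sqrt (qnum q γ₁) * (Real.sqrt (qnum q γ₂))⁻¹)) * q ^ (-(γ₁ / 2)) *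
        qnum q γ₂ = 0 := by
  linear_combination scalarX1 hq0 hq1 hγ₁ hγ₂

end Scalars

/-! #### The commutation relations on the tensor product -/

section Ops

variable {q γ₁ γ₂ : ℝ} (hq0 : 0 < q) (hq1 : q < 1) (hγ₁ : 0 < γ₁) (hγ₂ : 0 < γ₂)
include hq0 hq1 hγ₁ hγ₂

lemma hR_comm :
    LinearMap.rTensor HO (aMinus q γ₁) * LinearMap.rTensor HO (aPlus q γ₁) =
      LinearMap.rTensor HO (aPlus q γ₁) * LinearMap.rTensor HO (aMinus q γ₁) +
        ((qnum q γ₁ : ℝ) : ℂ) • 1 := by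
  rw [rT_mul, rT_mul, ccr q γ₁ (qnum_pos hq0 hq1 hγ₁).le, LinearMap.rTensor_add,
    LinearMap.rTensor_smul, LinearMap.rTensor_id]
  rfl

lemma hL_comm :
    LinearMap.lTensor HO (aMinus q γ₂) * LinearMap.lTensor HO (aPlus q γ₂) =
      LinearMap.lTensor HO (aPlus q γ₂) * LinearMap.lTensor HO (aMinus q γ₂) +
        ((qnum q γ₂ : ℝ) : ℂ) • 1 := by
  rw [lT_mul, lT_mul, ccr q γ₂ (qnum_pos hq0 hq1 hγ₂).le, LinearMap.lTensor_add,
    LinearMap.lTensor_smul, LinearMap.lTensor_id]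
  rfl

lemma opA :
    ΔaMinus q γ₁ γ₂ * ΔaPlus q γ₁ γ₂ =
      ΔaPlus q γ₁ γ₂ * ΔaMinus q γ₁ γ₂ + ((qnum q (γ₁ + γ₂) : ℝ) : ℂ) • 1 := by
  rw [ΔaMinus, ΔaPlus,
    comm_expand _ _ _ _ _ _ _ _ _ _ (hR_comm hq0 hq1 hγ₁ hγ₂) (hL_comm hq0 hq1 hγ₁ hγ₂)
      (rT_lT_comm _ _) ((rT_lT_comm _ _).symm)]
  congr 2
  exact_mod_cast congrArg Complex.ofReal (scalarA hq0 hq1 hγ₁ hγ₂)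

lemma opO :
    Odag q γ₁ γ₂ * Oop q γ₁ γ₂ =
      Oop q γ₁ γ₂ * Odag q γ₁ γ₂ + ((qnum q (γ₁ + γ₂) : ℝ) : ℂ) • 1 := by
  rw [Odag, Oop,
    comm_expand _ _ _ _ _ _ _ _ _ _ (hR_comm hq0 hq1 hγ₁ hγ₂) (hL_comm hq0 hq1 hγ₁ hγ₂)
      (rT_lT_comm _ _) ((rT_lT_comm _ _).symm)]
  congr 2
  exact_mod_cast congrArg Complex.ofReal (scalarO hq0 hq1 hγ₁ hγ₂)

lemma opX1 :
    ΔaMinus q γ₁ γ₂ * Oop q γ₁ γ₂ = Oop q γ₁ γ₂ * ΔaMinus q γ₁ γ₂ := by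
  rw [ΔaMinus, Oop,
    comm_expand _ _ _ _ _ _ _ _ _ _ (hR_comm hq0 hq1 hγ₁ hγ₂) (hL_comm hq0 hq1 hγ₁ hγ₂)
      (rT_lT_comm _ _) ((rT_lT_comm _ _).symm)]
  have h0 : (((q ^ (γ₂ / 2) : ℝ)) : ℂ) *
        ((q ^ (-(γ₁ / 2)) * (Real.sqrt (qnum q γ₁))⁻¹ * Real.sqrt (qnum q γ₂) : ℝ) : ℂ) *
        ((qnum q γ₁ : ℝ) : ℂ) +
      (((q ^ (-(γ₁ / 2)) : ℝ)) : ℂ) *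
        (-((q ^ (γ₂ / 2) * Real.sqrt (qnum q γ₁) * (Real.sqrt (qnum q γ₂))⁻¹ : ℝ) : ℂ)) *
        ((qnum q γ₂ : ℝ) : ℂ) = 0 := by
    exact_mod_cast congrArg Complex.ofReal (scalarX1 hq0 hq1 hγ₁ hγ₂)
  rw [h0]
  simp

lemma opX2 :
    Odag q γ₁ γ₂ * ΔaPlus q γ₁ γ₂ = ΔaPlus q γ₁ γ₂ * Odag q γ₁ γ₂ := by
  rw [Odag, ΔaPlus,
    comm_expand _ _ _ _ _ _ _ _ _ _ (hR_comm hq0 hq1 hγ₁ hγ₂) (hL_comm hq0 hq1 hγ₁ hγ₂)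
      (rT_lT_comm _ _) ((rT_lT_comm _ _).symm)]
  have h0 : ((q ^ (-(γ₁ / 2)) * (Real.sqrt (qnum q γ₁))⁻¹ * Real.sqrt (qnum q γ₂) : ℝ) : ℂ) *
        (((q ^ (γ₂ / 2) : ℝ)) : ℂ) * ((qnum q γ₁ : ℝ) : ℂ) +
      (-((q ^ (γ₂ / 2) * Real.sqrt (qnum q γ₁) * (Real.sqrt (qnum q γ₂))⁻¹ : ℝ) : ℂ)) *
        (((q ^ (-(γ₁ / 2)) : ℝ)) : ℂ) * ((qnum q γ₂ : ℝ) : ℂ) = 0 := by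
    exact_mod_cast congrArg Complex.ofReal (scalarX2 hq0 hq1 hγ₁ hγ₂)
  rw [h0]
  simp

end Ops

lemma opR (q γ₁ γ₂ : ℝ) :
    ΔaPlus q γ₁ γ₂ * Oop q γ₁ γ₂ = Oop q γ₁ γ₂ * ΔaPlus q γ₁ γ₂ := by
  rw [ΔaPlus, Oop, comm_raise _ _ _ _ _ _ (rT_lT_comm _ _)]

/-! #### Abstract boson lemmas -/

lemma lower_pow {V : Type*} [AddCommMonoid V] [Module ℂ V] (P M : Module.End ℂ V) (N : ℂ)
    (h : M * P = P * M + N • 1) (y : V) (hy : M y = 0) :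
    ∀ k : ℕ, M ((P ^ (k + 1)) y) = (((k : ℂ) + 1) * N) • (P ^ k) y := by
  intro k
  induction k with
  | zero =>
    rw [pow_one, pow_zero]
    have e : M (P y) = (M * P) y := rfl
    rw [e, h]
    simp [hy]
  | succ k ih =>
    have e1 : (P ^ (k + 1 + 1)) y = P ((P ^ (k + 1)) y) := by rw [pow_succ']; rfl
    have e2 : (P ^ (k + 1)) y = P ((P ^ k) y) := by rw [pow_succ']; rfl
    have e3 : M (P ((P ^ (k + 1)) y)) = (M * P) ((P ^ (k + 1)) y) := rfl
    rw [e1, e3, h]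
    simp only [LinearMap.add_apply, LinearMap.smul_apply, Module.End.one_apply,
      Module.End.mul_apply]
    rw [ih, map_smul, ← e2, ← add_smul]
    congr 1
    push_cast
    ring

lemma commute_pow_apply {V : Type*} [AddCommMonoid V] [Module ℂ V] (M Q : Module.End ℂ V)
    (h : M * Q = Q * M) (j : ℕ) (v : V) (hv : M v = 0) : M ((Q ^ j) v) = 0 := by
  have hc : M * Q ^ j = Q ^ j * M := Commute.pow_right h j
  have e : M ((Q ^ j) v) = (M * Q ^ j) v := rfl
  rw [e, hc, Module.End.mul_apply, hv, map_zero]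

lemma orth (P M : Module.End ℂ (HO ⊗[ℂ] HO)) (N : ℂ)
    (h : M * P = P * M + N • 1)
    (hadj : ∀ v w, tinner (P v) w = tinner v (M w))
    (x y : HO ⊗[ℂ] HO) (hx : M x = 0) (hy : M y = 0) :
    ∀ i i' : ℕ, tinner ((P ^ i) x) ((P ^ i') y) =
      (if i = i' then N ^ i * (i.factorial : ℂ) else 0) * tinner x y := by
  intro i
  induction i with
  | zero =>
    intro i'
    rcases i' with _ | k
    · simp [Module.End.one_apply]
    · have e : (P ^ (k + 1)) y = P ((P ^ k) y) := by rw [pow_succ']; rfl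
      rw [pow_zero, Module.End.one_apply, e, ← tinner_conj_symm (P ((P ^ k) y)) x, hadj, hx,
        tinner_zero_right, map_zero]
      simp
  | succ k ih =>
    intro i'
    have e : (P ^ (k + 1)) x = P ((P ^ k) x) := by rw [pow_succ']; rfl
    rw [e, hadj]
    rcases i' with _ | k'
    · rw [pow_zero, Module.End.one_apply, hy, tinner_zero_right]
      simp
    · rw [lower_pow P M N h y hy k', tinner_smul_right, ih k']
      by_cases hkk : k = k'
      · subst hkk
        simp only [if_pos rfl]
        push_cast [Nat.factorial_succ]
        ring
      · have h2 : ¬(k + 1 = k' + 1) := by omega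
        simp [hkk, h2]

end Stmt9Aux

/-- the vectors `v_i^{(j)}` are orthonormal:
`⟨v_i^{(j)}, v_{i'}^{(j')}⟩ = δ_{ii'} δ_{jj'}`. -/
theorem stmt9 (q γ₁ γ₂ c₁ c₂ : ℝ) (hq0 : 0 < q) (hq1 : q < 1)
    (hγ₁ : 0 < γ₁) (hγ₂ : 0 < γ₂) :
    ∀ i i' j j' : ℕ,
      tinner (vij q γ₁ γ₂ i j) (vij q γ₁ γ₂ i' j') =
        if i = i' ∧ j = j' then 1 else 0 := by
  intro i i' j j'
  have hγ : 0 < γ₁ + γ₂ := by linarith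
  have hQ : 0 < qnum q (γ₁ + γ₂) := Stmt9Aux.qnum_pos hq0 hq1 hγ
  -- the vacuum vector
  set v0 : HO ⊗[ℂ] HO := hv 0 ⊗ₜ[ℂ] hv 0 with hv0def
  have hv0A : ΔaMinus q γ₁ γ₂ v0 = 0 := by
    rw [hv0def, ΔaMinus]
    simp [LinearMap.rTensor_tmul, LinearMap.lTensor_tmul, Stmt9Aux.aMinus_hv0,
      TensorProduct.zero_tmul, TensorProduct.tmul_zero]
  have hv0B : Stmt9Aux.Odag q γ₁ γ₂ v0 = 0 := by
    rw [hv0def, Stmt9Aux.Odag]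
    simp [LinearMap.rTensor_tmul, LinearMap.lTensor_tmul, Stmt9Aux.aMinus_hv0,
      TensorProduct.zero_tmul, TensorProduct.tmul_zero]
  have t00 : tinner v0 v0 = 1 := by
    rw [hv0def, Stmt9Aux.tinner_tmul]
    simp [hv, Stmt9Aux.finner_single_left]
  have hxj : ∀ k : ℕ, ΔaMinus q γ₁ γ₂ (((Oop q γ₁ γ₂) ^ k) v0) = 0 := fun k =>
    Stmt9Aux.commute_pow_apply _ _ (Stmt9Aux.opX1 hq0 hq1 hγ₁ hγ₂) k v0 hv0A
  have main := Stmt9Aux.orth (ΔaPlus q γ₁ γ₂) (ΔaMinus q γ₁ γ₂) _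
    (Stmt9Aux.opA hq0 hq1 hγ₁ hγ₂) (Stmt9Aux.tinner_DaPlus q γ₁ γ₂)
    (((Oop q γ₁ γ₂) ^ j) v0) (((Oop q γ₁ γ₂) ^ j') v0) (hxj j) (hxj j') i i'
  have sub := Stmt9Aux.orth (Oop q γ₁ γ₂) (Stmt9Aux.Odag q γ₁ γ₂) _
    (Stmt9Aux.opO hq0 hq1 hγ₁ hγ₂) (Stmt9Aux.tinner_Oop q γ₁ γ₂) v0 v0 hv0B hv0B j j'
  rw [vij, vij, Stmt9Aux.tinner_smul_left, Stmt9Aux.tinner_smul_left,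
    Stmt9Aux.tinner_smul_right, Stmt9Aux.tinner_smul_right, Complex.conj_ofReal,
    Complex.conj_ofReal, main, sub, t00, mul_one]
  have normKey : ∀ n : ℕ,
      (((Real.sqrt ((qnum q (γ₁ + γ₂)) ^ n * n.factorial))⁻¹ : ℝ) : ℂ) *
        (((Real.sqrt ((qnum q (γ₁ + γ₂)) ^ n * n.factorial))⁻¹ : ℝ) : ℂ) *
        (((qnum q (γ₁ + γ₂) : ℝ) : ℂ) ^ n * (n.factorial : ℂ)) = 1 := by
    intro n
    have hpos : (0 : ℝ) < (qnum q (γ₁ + γ₂)) ^ n * n.factorial :=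
      mul_pos (pow_pos hQ n) (by exact_mod_cast n.factorial_pos)
    have hn0 : Real.sqrt ((qnum q (γ₁ + γ₂)) ^ n * n.factorial) ≠ 0 :=
      (Real.sqrt_pos.mpr hpos).ne'
    have hr : ((Real.sqrt ((qnum q (γ₁ + γ₂)) ^ n * n.factorial))⁻¹ *
        (Real.sqrt ((qnum q (γ₁ + γ₂)) ^ n * n.factorial))⁻¹ *
        ((qnum q (γ₁ + γ₂)) ^ n * n.factorial) : ℝ) = 1 := by
      have h2 : ((Real.sqrt ((qnum q (γ₁ + γ₂)) ^ n * n.factorial))⁻¹ *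
          (Real.sqrt ((qnum q (γ₁ + γ₂)) ^ n * n.factorial))⁻¹ *
          (Real.sqrt ((qnum q (γ₁ + γ₂)) ^ n * n.factorial) *
            Real.sqrt ((qnum q (γ₁ + γ₂)) ^ n * n.factorial)) : ℝ) = 1 := by
        field_simp
      rwa [Real.mul_self_sqrt hpos.le] at h2
    calc (((Real.sqrt ((qnum q (γ₁ + γ₂)) ^ n * n.factorial))⁻¹ : ℝ) : ℂ) *
        (((Real.sqrt ((qnum q (γ₁ + γ₂)) ^ n * n.factorial))⁻¹ : ℝ) : ℂ) *
        (((qnum q (γ₁ + γ₂) : ℝ) : ℂ) ^ n * (n.factorial : ℂ))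
        = ((((Real.sqrt ((qnum q (γ₁ + γ₂)) ^ n * n.factorial))⁻¹ *
            (Real.sqrt ((qnum q (γ₁ + γ₂)) ^ n * n.factorial))⁻¹ *
            ((qnum q (γ₁ + γ₂)) ^ n * n.factorial) : ℝ)) : ℂ) := by
          push_cast
          ring
      _ = 1 := by rw [hr]; norm_num
  by_cases hii : i = i'
  · by_cases hjj : j = j'
    · subst hii
      subst hjj
      simp only [if_pos rfl, and_self]
      calc (((Real.sqrt ((qnum q (γ₁ + γ₂)) ^ i * i.factorial))⁻¹ : ℝ) : ℂ) *
          ((((Real.sqrt ((qnum q (γ₁ + γ₂)) ^ j * j.factorial))⁻¹ : ℝ) : ℂ) *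
          ((((Real.sqrt ((qnum q (γ₁ + γ₂)) ^ i * i.factorial))⁻¹ : ℝ) : ℂ) *
          ((((Real.sqrt ((qnum q (γ₁ + γ₂)) ^ j * j.factorial))⁻¹ : ℝ) : ℂ) *
          ((((qnum q (γ₁ + γ₂) : ℝ) : ℂ) ^ i * (i.factorial : ℂ)) *
           (((qnum q (γ₁ + γ₂) : ℝ) : ℂ) ^ j * (j.factorial : ℂ))))))
          = ((((Real.sqrt ((qnum q (γ₁ + γ₂)) ^ i * i.factorial))⁻¹ : ℝ) : ℂ) *
              (((Real.sqrt ((qnum q (γ₁ + γ₂)) ^ i * i.factorial))⁻¹ : ℝ) : ℂ) *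
              (((qnum q (γ₁ + γ₂) : ℝ) : ℂ) ^ i * (i.factorial : ℂ))) *
            ((((Real.sqrt ((qnum q (γ₁ + γ₂)) ^ j * j.factorial))⁻¹ : ℝ) : ℂ) *
              (((Real.sqrt ((qnum q (γ₁ + γ₂)) ^ j * j.factorial))⁻¹ : ℝ) : ℂ) *
              (((qnum q (γ₁ + γ₂) : ℝ) : ℂ) ^ j * (j.factorial : ℂ))) := by ring
        _ = 1 := by rw [normKey i, normKey j, mul_one]
    · have : ¬(i = i' ∧ j = j') := fun h => hjj h.2
      simp [hjj, this]
  · have : ¬(i = i' ∧ j = j') := fun h => hii h.1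
    simp [hii, this]
end
end
end

section
/- Fix n ≥ 2, a real number q with 0 < q < 1, and γ > 0, and let V be a complex vector space with basis {w_{i,j} : 1 ≤ i ≤ j ≤ n−1}. Define linear maps σ₁, …, σ_{n−1} on V by (where j, k denote indices with {i−1, i, i+1} ∩ {j, k} = ∅, and only formulas with all indices in range apply): σ_i w_{j,k} = w_{j,k}; σ_i w_{i,i} = q^{−4γ} w_{i,i}; σ_i w_{i,k} = −q^{−2γ} w_{i,k}; σ_i w_{k,i} = −q^{−2γ} w_{k,i}; σ_i w_{i+1,k} = q^{−γ} w_{i,k} + w_{i+1,k}; σ_i w_{k,i+1} = q^{−γ} w_{k,i} + w_{k,i+1}; σ_i w_{i−1,k} = q^{−γ} w_{i,k} + w_{i−1,k}; σ_i w_{k,i−1} = q^{−γ} w_{k,i} + w_{k,i−1}; σ_i w_{i−1,i} = −q^{−2γ}(w_{i−1,i} + q^{−γ} w_{i,i}); σ_i w_{i,i+1} = −q^{−2γ}(w_{i,i+1} + q^{−γ} w_{i,i}); σ_i w_{i−1,i−1} = q^{−2γ} w_{i,i} + 2q^{−γ} w_{i−1,i} + w_{i−1,i−1}; σ_i w_{i+1,i+1}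 = q^{−2γ} w_{i,i} + 2q^{−γ} w_{i,i+1} + w_{i+1,i+1}; σ_i w_{i−1,i+1} = q^{−2γ} w_{i,i} + q^{−γ}(w_{i−1,i} + w_{i,i+1}) + w_{i−1,i+1}. Then σ_i σ_j = σ_j σ_i for |i−j| > 1 and σ_i σ_{i+1} σ_i = σ_{i+1} σ_i σ_{i+1} for 1 ≤ i ≤ n−2; i.e. the σ_i define a representation of the braid group B_n on V of dimension n(n−1)/2. -/
/-- The braid relations: the braid group `B_n` is the group presented by `n−1` generators
`σ₁, …, σ_{n−1}` subject to `σᵢσⱼ = σⱼσᵢ` for `|i−j| > 1` and `σᵢσ_{i+1}σᵢ = σ_{i+1}σᵢσ_{i+1}`. -/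
def braidRels (n : ℕ) : Set (FreeGroup (Fin (n - 1))) :=
  {r | (∃ i j : Fin (n - 1), ((i : ℕ) + 2 ≤ (j : ℕ) ∨ (j : ℕ) + 2 ≤ (i : ℕ)) ∧
          r = FreeGroup.of i * FreeGroup.of j * (FreeGroup.of j * FreeGroup.of i)⁻¹) ∨
       (∃ i j : Fin (n - 1), (j : ℕ) = (i : ℕ) + 1 ∧
          r = FreeGroup.of i * FreeGroup.of j * FreeGroup.of i *
              (FreeGroup.of j * FreeGroup.of i * FreeGroup.of j)⁻¹)}

/-- `j` is at distance at least `2` from `i` (i.e. `j ∉ {i−1, i, i+1}`). -/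
def far {n : ℕ} (i j : Fin (n - 1)) : Prop := (j : ℕ) + 1 < (i : ℕ) ∨ (i : ℕ) + 1 < (j : ℕ)

/-- Classification of an index `a` relative to a reference index `i`. -/
theorem stmt17_eqv {m : ℕ} (a c : Fin m) : a = c ∨ (a:ℕ) ≠ (c:ℕ) := by
  rcases eq_or_ne a c with rfl|h
  · exact Or.inl rfl
  · exact Or.inr (fun hh => h (Fin.val_injective hh))

theorem stmt17_cls {m : ℕ} (i a : Fin m) :
    i = a ∨ (a:ℕ)+1 < (i:ℕ) ∨ (a:ℕ)+1 = (i:ℕ) ∨ (a:ℕ) = (i:ℕ)+1 ∨ (i:ℕ)+1 < (a:ℕ) := by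
  rcases eq_or_ne a i with rfl|h
  · exact Or.inl rfl
  · right
    have hv : (a:ℕ) ≠ (i:ℕ) := fun hh => h (Fin.val_injective hh)
    omega

set_option maxHeartbeats 1600000 in
/-- let `V` be a complex vector space with basis `{w_{i,j} : i ≤ j}` indexed by
ordered pairs of indices in `{1, …, n−1}`, and let `σ_i` act by the explicit formulas below
(those of the Lawrence–Krammer–Bigelow-type representation obtained from the level-2 lowest
weight spaces). Then the `σ_i` satisfy the braid relations, so they define a representation of
the braid group `B_n` on `V`, of dimension `n(n−1)/2`. -/
theorem stmt17 (n : ℕ) (hn : 2 ≤ n) (q γ : ℝ) (hq0 : 0 < q) (hq1 : q < 1) (hγ : 0 < γ)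
    (V : Type*) [AddCommGroup V] [Module ℂ V]
    (w : Fin (n - 1) → Fin (n - 1) → V)
    (b : Module.Basis {p : Fin (n - 1) × Fin (n - 1) // p.1 ≤ p.2} ℂ V)
    (hb : ∀ p : {p : Fin (n - 1) × Fin (n - 1) // p.1 ≤ p.2}, b p = w p.1.1 p.1.2)
    (σ : Fin (n - 1) → (V →ₗ[ℂ] V))
    (h1 : ∀ i j k : Fin (n-1), far i j → far i k → j ≤ k → σ i (w j k) = w j k)
    (h2 : ∀ i : Fin (n-1), σ i (w i i) = ((q ^ (-(4 * γ)) : ℝ) : ℂ) • w i i)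
    (h3 : ∀ i k : Fin (n-1), far i k → i ≤ k →
      σ i (w i k) = -(((q ^ (-(2 * γ)) : ℝ) : ℂ)) • w i k)
    (h4 : ∀ i k : Fin (n-1), far i k → k ≤ i →
      σ i (w k i) = -(((q ^ (-(2 * γ)) : ℝ) : ℂ)) • w k i)
    (h5 : ∀ i i' k : Fin (n-1), (i' : ℕ) = (i : ℕ) + 1 → far i k → i' ≤ k →
      σ i (w i' k) = ((q ^ (-γ) : ℝ) : ℂ) • w i k + w i' k)
    (h6 : ∀ i i' k : Fin (n-1), (i' : ℕ) = (i : ℕ) + 1 → far i k → k ≤ i →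
      σ i (w k i') = ((q ^ (-γ) : ℝ) : ℂ) • w k i + w k i')
    (h7 : ∀ i i'' k : Fin (n-1), (i : ℕ) = (i'' : ℕ) + 1 → far i k → i'' ≤ k →
      σ i (w i'' k) = ((q ^ (-γ) : ℝ) : ℂ) • w i k + w i'' k)
    (h8 : ∀ i i'' k : Fin (n-1), (i : ℕ) = (i'' : ℕ) + 1 → far i k → k ≤ i'' →
      σ i (w k i'') = ((q ^ (-γ) : ℝ) : ℂ) • w k i + w k i'')
    (h9 : ∀ i i'' : Fin (n-1), (i : ℕ) = (i'' : ℕ) + 1 →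
      σ i (w i'' i) = -(((q ^ (-(2 * γ)) : ℝ) : ℂ)) • (w i'' i + ((q ^ (-γ) : ℝ) : ℂ) • w i i))
    (h10 : ∀ i i' : Fin (n-1), (i' : ℕ) = (i : ℕ) + 1 →
      σ i (w i i') = -(((q ^ (-(2 * γ)) : ℝ) : ℂ)) • (w i i' + ((q ^ (-γ) : ℝ) : ℂ) • w i i))
    (h11 : ∀ i i'' : Fin (n-1), (i : ℕ) = (i'' : ℕ) + 1 →
      σ i (w i'' i'') = ((q ^ (-(2 * γ)) : ℝ) : ℂ) • w i i +
        ((2 * q ^ (-γ) : ℝ) : ℂ) • w i'' i + w i'' i'')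
    (h12 : ∀ i i' : Fin (n-1), (i' : ℕ) = (i : ℕ) + 1 →
      σ i (w i' i') = ((q ^ (-(2 * γ)) : ℝ) : ℂ) • w i i +
        ((2 * q ^ (-γ) : ℝ) : ℂ) • w i i' + w i' i')
    (h13 : ∀ i i'' i' : Fin (n-1), (i : ℕ) = (i'' : ℕ) + 1 → (i' : ℕ) = (i : ℕ) + 1 →
      σ i (w i'' i') = ((q ^ (-(2 * γ)) : ℝ) : ℂ) • w i i +
        ((q ^ (-γ) : ℝ) : ℂ) • (w i'' i + w i i') + w i'' i') :
    (∀ i j : Fin (n - 1), (i : ℕ) + 2 ≤ (j : ℕ) ∨ (j : ℕ) + 2 ≤ (i : ℕ) →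
      σ i ∘ₗ σ j = σ j ∘ₗ σ i) ∧
    (∀ i j : Fin (n - 1), (j : ℕ) = (i : ℕ) + 1 →
      σ i ∘ₗ σ j ∘ₗ σ i = σ j ∘ₗ σ i ∘ₗ σ j) ∧
    Module.finrank ℂ V = n * (n - 1) / 2 ∧
    ∃ φ : PresentedGroup (braidRels n) →* (Module.End ℂ V)ˣ,
      ∀ i : Fin (n - 1), (↑(φ (PresentedGroup.of i)) : Module.End ℂ V) = σ i := by
  classical
  -- scalar bookkeeping
  set t : ℂ := ((q ^ (-γ) : ℝ) : ℂ) with ht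
  have ht0 : t ≠ 0 := by
    rw [ht]
    exact_mod_cast (Real.rpow_pos_of_pos hq0 _).ne'
  have e2 : ((q ^ (-(2 * γ)) : ℝ) : ℂ) = t^2 := by
    have : q ^ (-(2*γ)) = (q ^ (-γ))^(2:ℕ) := by
      rw [← Real.rpow_natCast (q ^ (-γ)) 2, ← Real.rpow_mul hq0.le]
      congr 1; push_cast; ring
    rw [this, ht]; push_cast; ring
  have e4 : ((q ^ (-(4 * γ)) : ℝ) : ℂ) = t^4 := by
    have : q ^ (-(4*γ)) = (q ^ (-γ))^(4:ℕ) := by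
      rw [← Real.rpow_natCast (q ^ (-γ)) 4, ← Real.rpow_mul hq0.le]
      congr 1; push_cast; ring
    rw [this, ht]; push_cast; ring
  have eD : ((2 * q ^ (-γ) : ℝ) : ℂ) = 2 * t := by
    rw [ht]; push_cast; ring
  simp only [e2, e4, eD] at h2 h3 h4 h9 h10 h11 h12 h13
  simp only [far, Fin.le_def] at h1 h3 h4 h5 h6 h7 h8
  -- the commuting relation
  have hcomm : ∀ i j : Fin (n-1), (i:ℕ) + 2 ≤ (j:ℕ) → σ i ∘ₗ σ j = σ j ∘ₗ σ i := by
    intro i j hij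
    apply b.ext
    rintro ⟨⟨a, c⟩, hac⟩
    have hac' : (a:ℕ) ≤ (c:ℕ) := hac
    simp only [hb, LinearMap.comp_apply]
    rcases stmt17_eqv a c with h0|h0 <;>
      rcases stmt17_cls i a with ha|ha|ha|ha|ha <;>
        rcases stmt17_cls j a with ha'|ha'|ha'|ha'|ha' <;>
          rcases stmt17_cls i c with hc|hc|hc|hc|hc <;>
            rcases stmt17_cls j c with hc'|hc'|hc'|hc'|hc' <;>
              (subst_vars
               first
                 | omega
                 | ((simp (disch := omega) only [map_add, map_smul,
                     h1, h2, h3, h4, h5, h6, h7, h8, h9, h10, h11, h12, h13]) <;>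
                    module))
  -- the braid relation
  have hbraid : ∀ i j : Fin (n-1), (j:ℕ) = (i:ℕ) + 1 →
      σ i ∘ₗ σ j ∘ₗ σ i = σ j ∘ₗ σ i ∘ₗ σ j := by
    intro i j hij
    clear hcomm
    apply b.ext
    rintro ⟨⟨a, c⟩, hac⟩
    have hac' : (a:ℕ) ≤ (c:ℕ) := hac
    simp only [hb, LinearMap.comp_apply]
    rcases stmt17_eqv a c with h0|h0 <;>
      rcases stmt17_cls i a with ha|ha|ha|ha|ha <;>
        rcases stmt17_cls j a with ha'|ha'|ha'|ha'|ha' <;>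
          rcases stmt17_cls i c with hc|hc|hc|hc|hc <;>
            rcases stmt17_cls j c with hc'|hc'|hc'|hc'|hc' <;>
              (subst_vars
               first
                 | omega
                 | ((simp (disch := omega) only [map_add, map_smul,
                     h1, h2, h3, h4, h5, h6, h7, h8, h9, h10, h11, h12, h13]) <;>
                    module))
  -- each σ i satisfies an explicit cubic, hence is invertible
  have hcube : ∀ i : Fin (n-1),
      σ i * σ i * σ i + (t^2 - 1 - t^4) • (σ i * σ i) + (t^4 - t^2 - t^6) • σ i
        = (-(t^6)) • (1 : Module.End ℂ V) := by
    intro i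
    clear hcomm hbraid
    apply b.ext
    rintro ⟨⟨a, c⟩, hac⟩
    have hac' : (a:ℕ) ≤ (c:ℕ) := hac
    simp only [hb, LinearMap.add_apply, LinearMap.smul_apply, Module.End.mul_apply,
      Module.End.one_apply]
    rcases stmt17_eqv a c with h0|h0 <;>
      rcases stmt17_cls i a with ha|ha|ha|ha|ha <;>
        rcases stmt17_cls i c with hc|hc|hc|hc|hc <;>
          (subst_vars
           first
             | omega
             | ((simp (disch := omega) only [map_add, map_smul,
                 h1, h2, h3, h4, h5, h6, h7, h8, h9, h10, h11, h12, h13]) <;>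
                module))
  have hunit : ∀ i : Fin (n-1), ∃ u : (Module.End ℂ V)ˣ, (u : Module.End ℂ V) = σ i := by
    intro i
    have hne : (-(t^6)) ≠ 0 := by
      simpa using pow_ne_zero 6 ht0
    refine ⟨⟨σ i, (-(t^6))⁻¹ • (σ i * σ i + (t^2 - 1 - t^4) • σ i
      + (t^4 - t^2 - t^6) • (1 : Module.End ℂ V)), ?_, ?_⟩, rfl⟩
    · rw [mul_smul_comm]
      have : σ i * (σ i * σ i + (t^2 - 1 - t^4) • σ i + (t^4 - t^2 - t^6) • (1 : Module.End ℂ V))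
          = σ i * σ i * σ i + (t^2 - 1 - t^4) • (σ i * σ i) + (t^4 - t^2 - t^6) • σ i := by
        rw [mul_add, mul_add, mul_smul_comm, mul_smul_comm, mul_one, mul_assoc]
      rw [this, hcube i, smul_smul, inv_mul_cancel₀ hne, one_smul]
    · rw [smul_mul_assoc]
      have : (σ i * σ i + (t^2 - 1 - t^4) • σ i + (t^4 - t^2 - t^6) • (1 : Module.End ℂ V)) * σ i
          = σ i * σ i * σ i + (t^2 - 1 - t^4) • (σ i * σ i) + (t^4 - t^2 - t^6) • σ i := by
        rw [add_mul, add_mul, smul_mul_assoc, smul_mul_assoc, one_mul]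
      rw [this, hcube i, smul_smul, inv_mul_cancel₀ hne, one_smul]
  choose u hu using hunit
  refine ⟨?_, ?_, ?_, ?_⟩
  · intro i j hij
    rcases hij with hij | hij
    · exact hcomm i j hij
    · exact (hcomm j i hij).symm
  · intro i j hij
    exact hbraid i j hij
  · rw [Module.finrank_eq_card_basis b,
      Fintype.card_congr (Sym2.sortEquiv (α := Fin (n-1))).symm, Sym2.card]
    rw [Fintype.card_fin]
    have h1 : n - 1 + 1 = n := by omega
    rw [h1, Nat.choose_two_right]
  · have hrel : ∀ r ∈ braidRels n, FreeGroup.lift u r = 1 := by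
      rintro r (⟨i, j, hij, rfl⟩ | ⟨i, j, hij, rfl⟩)
      · simp only [map_mul, map_inv, FreeGroup.lift_apply_of, mul_inv_eq_one]
        apply Units.ext
        simp only [Units.val_mul, hu]
        rcases hij with hij | hij
        · exact hcomm i j hij
        · exact (hcomm j i hij).symm
      · simp only [map_mul, map_inv, FreeGroup.lift_apply_of, mul_inv_eq_one]
        apply Units.ext
        simp only [Units.val_mul, hu]
        show σ i ∘ₗ σ j ∘ₗ σ i = σ j ∘ₗ σ i ∘ₗ σ j
        exact hbraid i j hij
    refine ⟨PresentedGroup.toGroup hrel, fun i => ?_⟩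
    rw [PresentedGroup.toGroup.of]
    exact hu i
end
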